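/- Suppose Ā is a Hurwitz n×n matrix and P is symmetric positive definite with ĀᵀP + PĀ = -Q ≤ 0. Let S_Q be a matrix whose columns form an orthonormal basis of ker Q. If there exists a symmetric matrix H with S_Qᵀ(ĀᵀH + HĀ)S_Q < 0 (negative definite), then for all sufficiently small ξ > 0 the matrix P̃ = P + ξH is positive definite and satisfies ĀᵀP̃ + P̃Ā < 0. -/

import Mathlib

open Matrix

lemma lyap_quad_smul {n : ℕ} (M : Matrix (Fin n) (Fin n) ℝ) (a : ℝ) (x : Fin n → ℝ) :
    (a • x) ⬝ᵥ (M *ᵥ (a • x)) = a^2 * (x ⬝ᵥ (M *ᵥ x)) := by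
  rw [Matrix.mulVec_smul, dotProduct_smul, smul_dotProduct]
  ring_nf

lemma lyap_herm_of_transpose {n : ℕ} {A : Matrix (Fin n) (Fin n) ℝ} (h : Aᵀ = A) :
    A.IsHermitian := by
  show Aᴴ = A
  ext i j
  rw [conjTranspose_apply, star_trivial]
  exact congrFun (congrFun h i) j

lemma lyap_aux_posdef {n : ℕ} (A B : Matrix (Fin n) (Fin n) ℝ)
    (hA : A.IsHermitian) (hB : B.IsHermitian)
    (h : ∀ x : Fin n → ℝ, ‖x‖ = 1 →
      0 ≤ x ⬝ᵥ (A *ᵥ x) ∧ (x ⬝ᵥ (A *ᵥ x) = 0 → 0 < x ⬝ᵥ (B *ᵥ x))) :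
    ∃ ξ₀ > 0, ∀ ξ : ℝ, 0 < ξ → ξ < ξ₀ → (A + ξ • B).PosDef := by
  set f : (Fin n → ℝ) → ℝ := fun x => x ⬝ᵥ (A *ᵥ x) with hf_def
  set g : (Fin n → ℝ) → ℝ := fun x => x ⬝ᵥ (B *ᵥ x) with hg_def
  have hfc : Continuous f := by
    unfold f; unfold dotProduct Matrix.mulVec dotProduct
    fun_prop
  have hgc : Continuous g := by
    unfold g; unfold dotProduct Matrix.mulVec dotProduct
    fun_prop
  set S := Metric.sphere (0 : Fin n → ℝ) 1 with hS_def
  have hScompact : IsCompact S := isCompact_sphere _ _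
  set K := {x ∈ S | g x ≤ 0} with hK_def
  have hKcompact : IsCompact K := by
    apply hScompact.inter_right
    exact isClosed_le hgc continuous_const
  have key : ∃ ξ₀ > 0, ∀ ξ : ℝ, 0 < ξ → ξ < ξ₀ → ∀ x ∈ S, 0 < f x + ξ * g x := by
    rcases K.eq_empty_or_nonempty with hKe | hKne
    · refine ⟨1, one_pos, fun ξ hξ _ x hx => ?_⟩
      have hxK : x ∉ K := by rw [hKe]; exact Set.notMem_empty x
      have hgx : 0 < g x := by
        by_contra hc
        exact hxK ⟨hx, le_of_not_gt hc⟩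
      have hfx : 0 ≤ f x := (h x (by simpa [hS_def, mem_sphere_iff_norm] using hx)).1
      nlinarith
    · obtain ⟨x₀, hx₀K, hmin⟩ := hKcompact.exists_isMinOn hKne hfc.continuousOn
      obtain ⟨y₀, hy₀K, hmax⟩ := hKcompact.exists_isMaxOn hKne (hgc.neg.continuousOn)
      set α := f x₀ with hα_def
      set b := -g y₀ with hb_def
      have hxnorm : ‖x₀‖ = 1 := by
        simpa [hS_def, mem_sphere_iff_norm] using hx₀K.1
      have hα_pos : 0 < α := by
        rcases (h x₀ hxnorm) with ⟨h1, h2⟩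
        rcases lt_or_eq_of_le h1 with h3 | h3
        · exact h3
        · exact absurd (h2 h3.symm) (not_lt.mpr hx₀K.2)
      have hb_nonneg : 0 ≤ b := by
        have := hy₀K.2; simp only [hb_def]; linarith
      refine ⟨α / (b + 1), by positivity, fun ξ hξ hξ' x hx => ?_⟩
      by_cases hxK : x ∈ K
      · have h1 : f x ≥ α := hmin hxK
        have h2 : -g x ≤ b := hmax hxK
        have h3 : ξ * (b + 1) < α :=
          (lt_div_iff₀ (by positivity : (0:ℝ) < b + 1)).mp hξ'
        nlinarith
      · have hgx : 0 < g x := by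
          by_contra hc
          exact hxK ⟨hx, le_of_not_gt hc⟩
        have hfx : 0 ≤ f x := (h x (by simpa [hS_def, mem_sphere_iff_norm] using hx)).1
        nlinarith
  obtain ⟨ξ₀, hξ₀, hkey⟩ := key
  refine ⟨ξ₀, hξ₀, fun ξ hξ1 hξ2 => ?_⟩
  refine posDef_iff_dotProduct_mulVec.mpr ⟨?_, ?_⟩
  · show ((A + ξ • B)ᴴ = A + ξ • B)
    rw [conjTranspose_add, hA.eq, conjTranspose_smul, hB.eq]
    simp
  · intro x hx
    have hxn : ‖x‖ ≠ 0 := norm_ne_zero_iff.mpr hx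
    set y := ‖x‖⁻¹ • x with hy_def
    have hyn : ‖y‖ = 1 := by
      rw [hy_def, norm_smul]
      simp [abs_of_nonneg (inv_nonneg.mpr (norm_nonneg x)), inv_mul_cancel₀ hxn]
    have hyS : y ∈ S := by simp [hS_def, mem_sphere_iff_norm, hyn]
    have hpos := hkey ξ hξ1 hξ2 y hyS
    have hxy : x = ‖x‖ • y := by
      rw [hy_def, smul_smul, mul_inv_cancel₀ hxn, one_smul]
    have split : y ⬝ᵥ ((A + ξ • B) *ᵥ y) = f y + ξ * g y := by
      simp [hf_def, hg_def, Matrix.add_mulVec, Matrix.smul_mulVec,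
        dotProduct_add, dotProduct_smul, smul_eq_mul]
    have expand : star x ⬝ᵥ ((A + ξ • B) *ᵥ x) = ‖x‖^2 * (f y + ξ * g y) := by
      rw [show (star x : Fin n → ℝ) = x from rfl]
      rw [hxy, lyap_quad_smul, split, norm_smul, hyn]
      simp [abs_of_nonneg (norm_nonneg x)]
    rw [expand]
    have : 0 < ‖x‖^2 := by positivity
    exact mul_pos this hpos

/-- Lemma on modifying a Lyapunov matrix P by ξH. -/
theorem lyapunov_modification
    (n r : ℕ)
    (Abar P Q H : Matrix (Fin n) (Fin n) ℝ)
    (hHurwitz : ∀ z ∈ spectrum ℂ (Abar.map (Complex.ofReal)), z.re < 0)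
    (hPpd : P.PosDef)
    (hLyap : Abarᵀ * P + P * Abar = -Q)
    (hQpsd : Q.PosSemidef)
    (SQ : Matrix (Fin n) (Fin r) ℝ)
    (hOrth : SQᵀ * SQ = 1)
    (hKer : ∀ x : Fin n → ℝ, Q *ᵥ x = 0 ↔ ∃ c : Fin r → ℝ, x = SQ *ᵥ c)
    (hHsym : Hᵀ = H)
    (hX : (-(SQᵀ * (Abarᵀ * H + H * Abar) * SQ)).PosDef) :
    ∃ ξ₀ > 0, ∀ ξ : ℝ, 0 < ξ → ξ < ξ₀ →
      (P + ξ • H).PosDef ∧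
      (-(Abarᵀ * (P + ξ • H) + (P + ξ • H) * Abar)).PosDef := by
  set M : Matrix (Fin n) (Fin n) ℝ := -(Abarᵀ * H + H * Abar) with hM_def
  have hMsym : Mᵀ = M := by
    rw [hM_def, transpose_neg, transpose_add, transpose_mul, transpose_mul,
      transpose_transpose, hHsym]
    rw [add_comm]
  have hid : ∀ ξ : ℝ, -(Abarᵀ * (P + ξ • H) + (P + ξ • H) * Abar) = Q + ξ • M := by
    intro ξ
    have expand : Abarᵀ * (P + ξ • H) + (P + ξ • H) * Abar
        = (Abarᵀ * P + P * Abar) + ξ • (Abarᵀ * H + H * Abar) := by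
      simp only [Matrix.mul_add, Matrix.add_mul, Matrix.mul_smul, Matrix.smul_mul, smul_add]
      abel
    rw [expand, hLyap, hM_def]
    module
  have quadSQ : ∀ c : Fin r → ℝ,
      (SQ *ᵥ c) ⬝ᵥ (M *ᵥ (SQ *ᵥ c)) = c ⬝ᵥ ((SQᵀ * M * SQ) *ᵥ c) := by
    intro c
    rw [show SQ *ᵥ c = c ᵥ* SQᵀ from (Matrix.vecMul_transpose SQ c).symm]
    simp only [Matrix.dotProduct_mulVec, Matrix.vecMul_vecMul, Matrix.mul_assoc]
    rw [Matrix.vecMul_transpose, Matrix.dotProduct_mulVec, Matrix.vecMul_vecMul,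
      Matrix.mul_assoc]
  -- the SQᵀ M SQ matrix in hX equals SQᵀ * M * SQ
  have hXeq : SQᵀ * M * SQ = -(SQᵀ * (Abarᵀ * H + H * Abar) * SQ) := by
    rw [hM_def, Matrix.mul_neg, Matrix.neg_mul]
  -- first application: P, H
  obtain ⟨ξ₁, hξ₁, hP⟩ := lyap_aux_posdef P H hPpd.1 (lyap_herm_of_transpose hHsym)
    (by
      intro x hx
      have hx0 : x ≠ 0 := by
        intro h0; rw [h0] at hx; simp at hx
      have := (posDef_iff_dotProduct_mulVec.mp hPpd).2 hx0
      rw [show (star x : Fin n → ℝ) = x from rfl] at this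
      exact ⟨le_of_lt this, fun h0 => absurd h0.symm (ne_of_lt this)⟩)
  -- second application: Q, M
  obtain ⟨ξ₂, hξ₂, hQ⟩ := lyap_aux_posdef Q M hQpsd.1 (lyap_herm_of_transpose hMsym)
    (by
      intro x hx
      have hx0 : x ≠ 0 := by
        intro h0; rw [h0] at hx; simp at hx
      have hnn := (posSemidef_iff_dotProduct_mulVec.mp hQpsd).2 x
      rw [show (star x : Fin n → ℝ) = x from rfl] at hnn
      refine ⟨hnn, fun h0 => ?_⟩
      have hQx : Q *ᵥ x = 0 := by
        have := (hQpsd.dotProduct_mulVec_zero_iff x).mp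
          (by rw [show (star x : Fin n → ℝ) = x from rfl]; exact h0)
        exact this
      obtain ⟨c, hc⟩ := (hKer x).mp hQx
      have hc0 : c ≠ 0 := by
        intro h0
        rw [h0, Matrix.mulVec_zero] at hc
        exact hx0 hc
      have := (posDef_iff_dotProduct_mulVec.mp hX).2 hc0
      rw [show (star c : Fin r → ℝ) = c from rfl, ← hXeq] at this
      rw [hc, quadSQ c]
      exact this)
  refine ⟨min ξ₁ ξ₂, lt_min hξ₁ hξ₂, fun ξ hξa hξb => ?_⟩
  constructor
  · exact hP ξ hξa (lt_of_lt_of_le hξb (min_le_left _ _))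
  · rw [hid ξ]
    exact hQ ξ hξa (lt_of_lt_of_le hξb (min_le_right _ _))
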